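/- arXiv:1303.1331 — 2 statements merged into one kernel-verified Lean document; each statement's English description precedes it below -/
import Mathlib

section
/- Let C be a G-graded category over a commutative ring k and L(C) its fusion algebra. Then L(C) is an associative unital G-graded k-algebra, and if C is pivotal the map ∗ : L(C) → L(C) sending the class ⟨X, f⟩ of f ∈ End(X) to ⟨X*, f*⟩ is a well-defined involutive algebra anti-automorphism carrying L_α onto L_{α^{-1}} for every α ∈ G. -/
set_option linter.unusedSectionVars false

open CategoryTheory MonoidalCategory CategoryTheory.Limits

universe w x v u v₂ u₂ v₃ u₃

namespace SurgeryHQFT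

/-- A pivotal category: a monoidal category with a dual object `dual X` for every object `X`,
together with the four (co)evaluation morphisms, satisfying the zig-zag identities, the
coincidence of left and right duals of morphisms, the coincidence of the left and right
monoidal constraints, and the unit condition. -/
class Pivotal (C : Type u) [Category.{v} C] [MonoidalCategory C] where
  dual : C → C
  ev : ∀ X : C, dual X ⊗ X ⟶ 𝟙_ C
  coev : ∀ X : C, 𝟙_ C ⟶ X ⊗ dual X
  ev' : ∀ X : C, X ⊗ dual X ⟶ 𝟙_ C
  coev' : ∀ X : C, 𝟙_ C ⟶ dual X ⊗ X
  zig₁ : ∀ X : C,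
    (λ_ X).inv ≫ (coev X ▷ X) ≫ (α_ X (dual X) X).hom ≫ (X ◁ ev X) ≫ (ρ_ X).hom = 𝟙 X
  zig₂ : ∀ X : C,
    (ρ_ (dual X)).inv ≫ (dual X ◁ coev X) ≫ (α_ (dual X) X (dual X)).inv
      ≫ (ev X ▷ dual X) ≫ (λ_ (dual X)).hom = 𝟙 (dual X)
  zig₃ : ∀ X : C,
    (ρ_ X).inv ≫ (X ◁ coev' X) ≫ (α_ X (dual X) X).inv ≫ (ev' X ▷ X) ≫ (λ_ X).hom = 𝟙 X
  zig₄ : ∀ X : C,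
    (λ_ (dual X)).inv ≫ (coev' X ▷ dual X) ≫ (α_ (dual X) X (dual X)).hom
      ≫ (dual X ◁ ev' X) ≫ (ρ_ (dual X)).hom = 𝟙 (dual X)
  dual_hom_eq : ∀ {X Y : C} (f : X ⟶ Y),
    (ρ_ (dual Y)).inv ≫ (dual Y ◁ (coev X ≫ (f ▷ dual X)))
      ≫ (α_ (dual Y) Y (dual X)).inv ≫ (ev Y ▷ dual X) ≫ (λ_ (dual X)).hom
    = (λ_ (dual Y)).inv ≫ ((coev' X ≫ (dual X ◁ f)) ▷ dual Y)
      ≫ (α_ (dual X) Y (dual Y)).hom ≫ (dual X ◁ ev' Y) ≫ (ρ_ (dual X)).hom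
  constraint_eq : ∀ X Y : C,
    (ρ_ (dual X ⊗ dual Y)).inv ≫ ((dual X ⊗ dual Y) ◁ coev (Y ⊗ X))
      ≫ (α_ (dual X) (dual Y) ((Y ⊗ X) ⊗ dual (Y ⊗ X))).hom
      ≫ (dual X ◁ ((dual Y ◁ (α_ Y X (dual (Y ⊗ X))).hom)
            ≫ (α_ (dual Y) Y (X ⊗ dual (Y ⊗ X))).inv
            ≫ (ev Y ▷ (X ⊗ dual (Y ⊗ X))) ≫ (λ_ (X ⊗ dual (Y ⊗ X))).hom))
      ≫ (α_ (dual X) X (dual (Y ⊗ X))).inv ≫ (ev X ▷ dual (Y ⊗ X)) ≫ (λ_ (dual (Y ⊗ X))).hom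
    = (λ_ (dual X ⊗ dual Y)).inv ≫ (coev' (Y ⊗ X) ▷ (dual X ⊗ dual Y))
      ≫ (α_ (dual (Y ⊗ X)) (Y ⊗ X) (dual X ⊗ dual Y)).hom
      ≫ (dual (Y ⊗ X) ◁ ((α_ Y X (dual X ⊗ dual Y)).hom
            ≫ (Y ◁ ((α_ X (dual X) (dual Y)).inv ≫ (ev' X ▷ dual Y) ≫ (λ_ (dual Y)).hom))
            ≫ ev' Y))
      ≫ (ρ_ (dual (Y ⊗ X))).hom
  unit_ev : (ρ_ (dual (𝟙_ C))).inv ≫ ev (𝟙_ C) = (λ_ (dual (𝟙_ C))).inv ≫ ev' (𝟙_ C)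

namespace Pivotal

variable {C : Type u} [Category.{v} C] [MonoidalCategory C] [Pivotal C]

/-- The dual of a morphism in a pivotal category. -/
def dualHom {X Y : C} (f : X ⟶ Y) : dual Y ⟶ dual X :=
  (ρ_ (dual Y)).inv ≫ (dual Y ◁ (coev X ≫ (f ▷ dual X)))
    ≫ (α_ (dual Y) Y (dual X)).inv ≫ (ev Y ▷ dual X) ≫ (λ_ (dual X)).hom

/-- The left trace of an endomorphism in a pivotal category. -/
def trl {X : C} (f : X ⟶ X) : 𝟙_ C ⟶ 𝟙_ C :=
  coev' X ≫ (dual X ◁ f) ≫ ev X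

/-- The right trace of an endomorphism in a pivotal category. -/
def trr {X : C} (f : X ⟶ X) : 𝟙_ C ⟶ 𝟙_ C :=
  coev X ≫ (f ▷ dual X) ≫ ev' X

/-- The left dimension of an object. -/
def diml (X : C) : 𝟙_ C ⟶ 𝟙_ C := trl (𝟙 X)

/-- The right dimension of an object. -/
def dimr (X : C) : 𝟙_ C ⟶ 𝟙_ C := trr (𝟙 X)

end Pivotal

open Pivotal

section Functors

variable {C : Type u} [Category.{v} C] [MonoidalCategory C] [Pivotal C]
variable {D : Type u₂} [Category.{v₂} D] [MonoidalCategory D] [Pivotal D]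

/-- The canonical comparison morphism `F^l(X) : F(X^*) ⟶ F(X)^*` for a strong monoidal
functor between pivotal categories. -/
def Fl (F : C ⥤ D) [m : F.Monoidal] (X : C) : F.obj (dual X) ⟶ dual (F.obj X) :=
  (ρ_ (F.obj (dual X))).inv
    ≫ (F.obj (dual X) ◁ coev (F.obj X))
    ≫ (α_ (F.obj (dual X)) (F.obj X) (dual (F.obj X))).inv
    ≫ ((Functor.LaxMonoidal.μ F (dual X) X ≫ F.map (ev X) ≫ Functor.OplaxMonoidal.η F)
        ▷ dual (F.obj X))
    ≫ (λ_ (dual (F.obj X))).hom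

/-- The canonical comparison morphism `F^r(X) : F(X^*) ⟶ F(X)^*` for a strong monoidal
functor between pivotal categories. -/
def Fr (F : C ⥤ D) [m : F.Monoidal] (X : C) : F.obj (dual X) ⟶ dual (F.obj X) :=
  (λ_ (F.obj (dual X))).inv
    ≫ (coev' (F.obj X) ▷ F.obj (dual X))
    ≫ (α_ (dual (F.obj X)) (F.obj X) (F.obj (dual X))).hom
    ≫ (dual (F.obj X) ◁ (Functor.LaxMonoidal.μ F X (dual X) ≫ F.map (ev' X)
          ≫ Functor.OplaxMonoidal.η F))
    ≫ (ρ_ (dual (F.obj X))).hom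

end Functors


section MonHelpers
variable {C : Type u} [Category.{v} C] [MonoidalCategory C]
variable {D : Type u₂} [Category.{v₂} D] [MonoidalCategory D]

/-- The unit morphism of a monoidal functor (with explicit monoidal structure). -/
def mε (F : C ⥤ D) (m : F.Monoidal) : 𝟙_ D ⟶ F.obj (𝟙_ C) :=
  letI := m; Functor.LaxMonoidal.ε F

/-- The tensorator of a monoidal functor (with explicit monoidal structure). -/
def mμ (F : C ⥤ D) (m : F.Monoidal) (X Y : C) : F.obj X ⊗ F.obj Y ⟶ F.obj (X ⊗ Y) :=
  letI := m; Functor.LaxMonoidal.μ F X Y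

/-- The inverse of the unit morphism of a monoidal functor. -/
def mη (F : C ⥤ D) (m : F.Monoidal) : F.obj (𝟙_ C) ⟶ 𝟙_ D :=
  letI := m; Functor.OplaxMonoidal.η F

/-- The inverse of the tensorator of a monoidal functor. -/
def mδ (F : C ⥤ D) (m : F.Monoidal) (X Y : C) : F.obj (X ⊗ Y) ⟶ F.obj X ⊗ F.obj Y :=
  letI := m; Functor.OplaxMonoidal.δ F X Y

end MonHelpers

section Graded

variable (k : Type w) [CommRing k] (G : Type x) [Group G]
variable (C : Type u) [Category.{v} C] [MonoidalCategory C] [Pivotal C]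
  [Preadditive C] [CategoryTheory.Linear k C] [MonoidalPreadditive C] [MonoidalLinear k C]

/-- A pivotal `G`-graded category over `k`: a system of pairwise disjoint homogeneous degrees
for objects such that the unit is of degree `1`, monoidal products multiply the degrees,
duals invert degrees, and morphisms between objects of different degrees vanish. -/
structure GGraded where
  mem : C → G → Prop
  mem_unique : ∀ {X : C} {a b : G}, mem X a → mem X b → a = b
  unit_mem : mem (𝟙_ C) 1
  tensor_mem : ∀ {X Y : C} {a b : G}, mem X a → mem Y b → mem (X ⊗ Y) (a * b)
  dual_mem : ∀ {X : C} {a : G}, mem X a → mem (Pivotal.dual X) a⁻¹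
  hom_vanish : ∀ {X Y : C} {a b : G}, mem X a → mem Y b → a ≠ b → ∀ f : X ⟶ Y, f = 0

variable {G C}

/-- The canonical identification `(φ a).obj X ⟶ (φ b).obj X` induced by an equality `a = b`. -/
def φObjCast (φ : G → C ⥤ C) {a b : G} (h : a = b) (X : C) : (φ a).obj X ⟶ (φ b).obj X :=
  eqToHom (by rw [h])

variable (G C)

/-- A (pivotal) `G`-crossed category: a pivotal `G`-graded category equipped with a crossing,
i.e. a strong monoidal functor from `G` to the monoidal category of `k`-linear strong monoidal
auto-equivalences of `C`, such that `φ a` maps degree `b` to degree `a⁻¹ * b * a`. -/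
structure GCrossedCat extends GGraded G C where
  φ : G → C ⥤ C
  φM : ∀ a : G, (φ a).Monoidal
  φ_add : ∀ (a : G) {X Y : C} (f g : X ⟶ Y), (φ a).map (f + g) = (φ a).map f + (φ a).map g
  φ_smul : ∀ (a : G) (c : k) {X Y : C} (f : X ⟶ Y), (φ a).map (c • f) = c • (φ a).map f
  φ_equiv : ∀ a : G, (φ a).IsEquivalence
  φ_mem : ∀ (a : G) {X : C} {b : G}, mem X b → mem ((φ a).obj X) (a⁻¹ * b * a)
  φ₂ : ∀ (a b : G) (X : C), (φ a).obj ((φ b).obj X) ≅ (φ (b * a)).obj X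
  φ₀ : ∀ X : C, X ≅ (φ (1 : G)).obj X
  φ₂_natural : ∀ (a b : G) {X Y : C} (f : X ⟶ Y),
    (φ a).map ((φ b).map f) ≫ (φ₂ a b Y).hom = (φ₂ a b X).hom ≫ (φ (b * a)).map f
  φ₀_natural : ∀ {X Y : C} (f : X ⟶ Y),
    f ≫ (φ₀ Y).hom = (φ₀ X).hom ≫ (φ (1 : G)).map f
  φ₂_monoidal : ∀ (a b : G) (X Y : C),
    mμ (φ a) (φM a) ((φ b).obj X) ((φ b).obj Y)
        ≫ (φ a).map (mμ (φ b) (φM b) X Y)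
        ≫ (φ₂ a b (X ⊗ Y)).hom
      = ((φ₂ a b X).hom ⊗ₘ (φ₂ a b Y).hom) ≫ mμ (φ (b * a)) (φM (b * a)) X Y
  φ₂_unit : ∀ (a b : G),
    mε (φ (b * a)) (φM (b * a))
      = mε (φ a) (φM a) ≫ (φ a).map (mε (φ b) (φM b)) ≫ (φ₂ a b (𝟙_ C)).hom
  φ₀_monoidal : ∀ X Y : C,
    (φ₀ (X ⊗ Y)).hom
      = ((φ₀ X).hom ⊗ₘ (φ₀ Y).hom) ≫ mμ (φ (1 : G)) (φM 1) X Y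
  φ₀_unit : (φ₀ (𝟙_ C)).hom = mε (φ (1 : G)) (φM 1)
  φ_assoc : ∀ (a b c : G) (X : C),
    (φ₂ a b ((φ c).obj X)).hom ≫ (φ₂ (b * a) c X).hom
      = (φ a).map ((φ₂ b c X).hom) ≫ (φ₂ a (c * b) X).hom
          ≫ φObjCast φ (mul_assoc c b a) X
  φ_unit_left : ∀ (a : G) (X : C),
    (φ a).map ((φ₀ X).hom) ≫ (φ₂ a 1 X).hom ≫ φObjCast φ (one_mul a) X = 𝟙 ((φ a).obj X)
  φ_unit_right : ∀ (a : G) (X : C),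
    (φ₀ ((φ a).obj X)).hom ≫ (φ₂ 1 a X).hom ≫ φObjCast φ (mul_one a) X = 𝟙 ((φ a).obj X)

variable {k G C}

namespace GCrossedCat

variable (𝒞 : GCrossedCat k G C)

/-- The crossing of `𝒞` is pivotal if each functor `φ a` is pivotal, i.e. `F^l = F^r`. -/
def PivotalCrossing : Prop :=
  ∀ (a : G) (X : C), Fl (𝒞.φ a) (m := 𝒞.φM a) X = Fr (𝒞.φ a) (m := 𝒞.φM a) X

/-- Given (the inverse `ψi` of) an isomorphism `ψ : X ≅ (φ a).obj Y`, this is the isomorphism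
`overline ψ : Y ⟶ (φ a⁻¹).obj X`, defined as `φ_{a⁻¹}(ψ⁻¹) ∘ φ₂(a⁻¹,a)_Y⁻¹ ∘ (φ₀)_Y`. -/
def barHom {X Y : C} {a : G} (ψi : (𝒞.φ a).obj Y ⟶ X) : Y ⟶ (𝒞.φ a⁻¹).obj X :=
  (𝒞.φ₀ Y).hom ≫ φObjCast 𝒞.φ (show (1 : G) = a * a⁻¹ by group) Y
    ≫ (𝒞.φ₂ a⁻¹ a Y).inv ≫ (𝒞.φ a⁻¹).map ψi

lemma mem_φ_self {X : C} {a : G} (h : 𝒞.mem X a) : 𝒞.mem ((𝒞.φ a).obj X) a := by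
  have h2 : a⁻¹ * a * a = a := by group
  have := 𝒞.φ_mem a h
  rwa [h2] at this

end GCrossedCat

end Graded

section Braided

variable (k : Type w) [CommRing k] (G : Type x) [Group G]
variable (C : Type u) [Category.{v} C] [MonoidalCategory C] [Pivotal C]
  [Preadditive C] [CategoryTheory.Linear k C] [MonoidalPreadditive C] [MonoidalLinear k C]

/-- A `G`-braided category: a `G`-crossed category equipped with a `G`-braiding
`τ_{X,Y} : X ⊗ Y ⟶ Y ⊗ φ_{|Y|}(X)` (for `Y` homogeneous), natural in both variables,
satisfying the two hexagon-type axioms and invariance under the crossing. -/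
structure GBraidedCat extends GCrossedCat k G C where
  τ : ∀ (X Y : C) (b : G), mem Y b → (X ⊗ Y ⟶ Y ⊗ (φ b).obj X)
  τ_iso : ∀ (X Y : C) (b : G) (h : mem Y b), IsIso (τ X Y b h)
  τ_nat_left : ∀ {X X' : C} (f : X ⟶ X') (Y : C) (b : G) (h : mem Y b),
    (f ▷ Y) ≫ τ X' Y b h = τ X Y b h ≫ (Y ◁ (φ b).map f)
  τ_nat_right : ∀ (X : C) {Y Y' : C} (b : G) (h : mem Y b) (h' : mem Y' b) (g : Y ⟶ Y'),
    (X ◁ g) ≫ τ X Y' b h' = τ X Y b h ≫ (g ▷ (φ b).obj X)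
  braiding₁ : ∀ (X Y Z : C) (b c : G) (hY : mem Y b) (hZ : mem Z c),
    τ X (Y ⊗ Z) (b * c) (tensor_mem hY hZ)
      = (α_ X Y Z).inv ≫ (τ X Y b hY ▷ Z) ≫ (α_ Y ((φ b).obj X) Z).hom
          ≫ (Y ◁ τ ((φ b).obj X) Z c hZ) ≫ (α_ Y Z ((φ c).obj ((φ b).obj X))).inv
          ≫ ((Y ⊗ Z) ◁ (φ₂ c b X).hom)
  braiding₂ : ∀ (X Y Z : C) (c : G) (hZ : mem Z c),
    τ (X ⊗ Y) Z c hZ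
      = (α_ X Y Z).hom ≫ (X ◁ τ Y Z c hZ) ≫ (α_ X Z ((φ c).obj Y)).inv
          ≫ (τ X Z c hZ ▷ (φ c).obj Y) ≫ (α_ Z ((φ c).obj X) ((φ c).obj Y)).hom
          ≫ (Z ◁ mμ (φ c) (φM c) X Y)
  braiding₃ : ∀ (a : G) (X Y : C) (b : G) (hY : mem Y b),
    τ ((φ a).obj X) ((φ a).obj Y) (a⁻¹ * b * a) (φ_mem a hY)
        ≫ ((φ a).obj Y ◁ ((φ₂ (a⁻¹ * b * a) a X).hom
              ≫ φObjCast φ (show a * (a⁻¹ * b * a) = b * a by group) X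
              ≫ (φ₂ a b X).inv))
        ≫ mμ (φ a) (φM a) Y ((φ b).obj X)
      = mμ (φ a) (φM a) X Y ≫ (φ a).map (τ X Y b hY)

variable {k G C}

namespace GBraidedCat

variable (𝒞 : GBraidedCat k G C)

/-- The inverse of the `G`-braiding. -/
noncomputable def τinv (X Y : C) (b : G) (h : 𝒞.mem Y b) : Y ⊗ (𝒞.φ b).obj X ⟶ X ⊗ Y :=
  letI := 𝒞.τ_iso X Y b h
  inv (𝒞.τ X Y b h)

/-- The twist `θ_X = (ev_X ⊗ id)(id_{X^*} ⊗ τ_{X,X})(coev'_X ⊗ id_X) : X ⟶ φ_{|X|}(X)`. -/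
def twist (X : C) (a : G) (h : 𝒞.mem X a) : X ⟶ (𝒞.φ a).obj X :=
  (λ_ X).inv ≫ (coev' X ▷ X) ≫ (α_ (dual X) X X).hom
    ≫ (dual X ◁ 𝒞.τ X X a h) ≫ (α_ (dual X) X ((𝒞.φ a).obj X)).inv
    ≫ (ev X ▷ (𝒞.φ a).obj X) ≫ (λ_ ((𝒞.φ a).obj X)).hom

/-- The braiding of the neutral component `C_1`. -/
def nBraiding (X Y : C) (hY : 𝒞.mem Y 1) : X ⊗ Y ⟶ Y ⊗ X :=
  𝒞.τ X Y 1 hY ≫ (Y ◁ (𝒞.φ₀ X).inv)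

/-- The twist of the neutral component `C_1`. -/
def nTwist (X : C) (hX : 𝒞.mem X 1) : X ⟶ X :=
  𝒞.twist X 1 hX ≫ (𝒞.φ₀ X).inv

end GBraidedCat

variable (k G C)

/-- A `G`-ribbon category: a pivotal `G`-braided category whose crossing is pivotal and
whose twist is self-dual. -/
structure GRibbonCat extends GBraidedCat k G C where
  crossing_pivotal : toGCrossedCat.PivotalCrossing
  twist_selfdual : ∀ (X : C) (a : G) (hX : mem X a),
    Pivotal.dualHom (toGBraidedCat.twist X a hX)
      = toGBraidedCat.twist (dual ((φ a).obj X)) a⁻¹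
            (dual_mem (toGCrossedCat.mem_φ_self hX))
          ≫ Fl (φ a⁻¹) (m := φM a⁻¹) ((φ a).obj X)
          ≫ Pivotal.dualHom
              (φObjCast φ (show (1 : G) = a * a⁻¹ by group) X ≫ (φ₂ a⁻¹ a X).inv)
          ≫ Pivotal.dualHom (φ₀ X).hom

end Braided

section FusionAlg

variable {k : Type w} [CommRing k] {G : Type x} [Group G]
variable {C : Type u} [Category.{v} C] [MonoidalCategory C] [Pivotal C]
  [Preadditive C] [CategoryTheory.Linear k C] [MonoidalPreadditive C] [MonoidalLinear k C]

variable (k) (gr : GGraded G C)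

/-- The homogeneous objects of a `G`-graded category. -/
def Homog : Type _ := {X : C // ∃ a : G, gr.mem X a}

/-- The direct sum `⊕_X End(X)` over all homogeneous objects `X`. -/
abbrev Ltilde : Type _ := DirectSum (Homog gr) (fun X => (X.1 ⟶ X.1))

/-- The canonical inclusion of `End(X)` into `Ltilde`. -/
noncomputable def lofh (X : C) {a : G} (hX : gr.mem X a) (f : X ⟶ X) : Ltilde gr :=
  letI := Classical.decEq (Homog gr)
  DirectSum.lof k (Homog gr) (fun X => (X.1 ⟶ X.1)) ⟨X, ⟨a, hX⟩⟩ f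

/-- The submodule of trace relations `⟨X, fg⟩ - ⟨Y, gf⟩`. -/
noncomputable def fusionRel : Submodule k (Ltilde gr) :=
  Submodule.span k
    {x | ∃ (X Y : C) (a : G) (hX : gr.mem X a) (hY : gr.mem Y a) (f : Y ⟶ X) (g : X ⟶ Y),
      x = lofh k gr X hX (g ≫ f) - lofh k gr Y hY (f ≫ g)}

/-- The fusion algebra (as a `k`-module) of a `G`-graded category. -/
abbrev FusionL : Type _ := Ltilde gr ⧸ fusionRel k gr

/-- The class `⟨X, f⟩` of an endomorphism of a homogeneous object in the fusion algebra. -/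
noncomputable def fcls (X : C) {a : G} (hX : gr.mem X a) (f : X ⟶ X) : FusionL k gr :=
  Submodule.Quotient.mk (lofh k gr X hX f)

/-- The degree-`a` part of the fusion algebra. -/
noncomputable def FusionLsub (a : G) : Submodule k (FusionL k gr) :=
  Submodule.span k {x | ∃ (X : C) (hX : gr.mem X a) (f : X ⟶ X), x = fcls k gr X hX f}

end FusionAlg

section Fusion

variable (k : Type w) [CommRing k]
variable {C : Type u} [Category.{v} C] [Preadditive C] [CategoryTheory.Linear k C]

/-- An object `X` is simple if `End(X)` is a free `k`-module of rank one with basis `id_X`. -/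
def SimpleObj (X : C) : Prop := ∀ f : X ⟶ X, ∃! c : k, f = c • 𝟙 X

variable (C) [MonoidalCategory C] [Pivotal C] [MonoidalPreadditive C] [MonoidalLinear k C]
  [HasFiniteBiproducts C]

/-- A pre-fusion category over `k`: a split semisimple `k`-additive pivotal category
with simple unit object. -/
structure PreFusion : Prop where
  semisimple : ∀ X : C, ∃ (n : ℕ) (s : Fin n → C),
    (∀ i, SimpleObj k (s i)) ∧ Nonempty (X ≅ ⨁ s)
  hom_vanish : ∀ {X Y : C}, SimpleObj k X → SimpleObj k Y → IsEmpty (X ≅ Y) →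
    ∀ f : X ⟶ Y, f = 0
  unit_simple : SimpleObj k (𝟙_ C)

end Fusion

section PivotalAux

variable {C : Type u} [Category.{v} C] [MonoidalCategory C] [Pivotal C]

open Pivotal

/-- The pairing `(X, X*)` coming from the pivotal structure. -/
noncomputable instance (priority := 2000) pivR (X : C) : ExactPairing X (Pivotal.dual X) where
  coevaluation' := Pivotal.coev X
  evaluation' := Pivotal.ev X
  coevaluation_evaluation' := by
    rw [← cancel_epi (ρ_ (Pivotal.dual X)).inv, ← cancel_mono (λ_ (Pivotal.dual X)).hom]
    have h := Pivotal.zig₂ (C := C) X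
    simp only [Category.assoc] at h ⊢
    rw [h]; simp
  evaluation_coevaluation' := by
    rw [← cancel_epi (λ_ X).inv, ← cancel_mono (ρ_ X).hom]
    have h := Pivotal.zig₁ (C := C) X
    simp only [Category.assoc] at h ⊢
    rw [h]; simp

/-- The pairing `(X*, X)` coming from the pivotal structure. -/
noncomputable instance (priority := 2000) pivL (X : C) : ExactPairing (Pivotal.dual X) X where
  coevaluation' := Pivotal.coev' X
  evaluation' := Pivotal.ev' X
  coevaluation_evaluation' := by
    rw [← cancel_epi (ρ_ X).inv, ← cancel_mono (λ_ X).hom]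
    have h := Pivotal.zig₃ (C := C) X
    simp only [Category.assoc] at h ⊢
    rw [h]; simp
  evaluation_coevaluation' := by
    rw [← cancel_epi (λ_ (Pivotal.dual X)).inv, ← cancel_mono (ρ_ (Pivotal.dual X)).hom]
    have h := Pivotal.zig₄ (C := C) X
    simp only [Category.assoc] at h ⊢
    rw [h]; simp

@[reducible] noncomputable instance (priority := 2000) pivHasRightDual (X : C) : HasRightDual X :=
  ⟨Pivotal.dual X⟩

@[reducible] noncomputable instance (priority := 2000) pivHasLeftDual (X : C) : HasLeftDual X :=
  ⟨Pivotal.dual X⟩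

@[simp] lemma piv_coev (X : C) : η_ X (Pivotal.dual X) = Pivotal.coev X := rfl
@[simp] lemma piv_ev (X : C) : ε_ X (Pivotal.dual X) = Pivotal.ev X := rfl
@[simp] lemma piv_coev' (X : C) : η_ (Pivotal.dual X) X = Pivotal.coev' X := rfl
@[simp] lemma piv_ev' (X : C) : ε_ (Pivotal.dual X) X = Pivotal.ev' X := rfl

lemma dualHom_eq_mate {X Y : C} (f : X ⟶ Y) : Pivotal.dualHom f = fᘁ := by
  simp only [Pivotal.dualHom, rightAdjointMate, piv_coev, piv_ev,
    MonoidalCategory.whiskerLeft_comp, Category.assoc]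
  rfl

lemma mate_eq_lmate {X Y : C} (f : X ⟶ Y) : fᘁ = (ᘁf) := by
  have h := Pivotal.dual_hom_eq (C := C) f
  simp only [MonoidalCategory.whiskerLeft_comp, comp_whiskerRight, Category.assoc] at h
  simp only [rightAdjointMate, leftAdjointMate, piv_coev, piv_ev, piv_coev', piv_ev',
    Category.assoc]
  exact h

/-- `X` as a left dual of `dual X` via the pairing `pivR X`. -/
noncomputable def altL (X : C) : HasLeftDual (Pivotal.dual X) :=
  @HasLeftDual.mk C _ _ (Pivotal.dual X) X (pivR X)

lemma coev_comp_mate {X Y : C} (f : X ⟶ Y) :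
    η_ Y (Pivotal.dual Y) ≫ Y ◁ rightAdjointMate f
      = η_ X (Pivotal.dual X) ≫ f ▷ Pivotal.dual X :=
  coevaluation_comp_rightAdjointMate f

lemma mate_comp_ev {X Y : C} (f : X ⟶ Y) :
    rightAdjointMate f ▷ X ≫ ε_ X (Pivotal.dual X)
      = Pivotal.dual Y ◁ f ≫ ε_ Y (Pivotal.dual Y) :=
  rightAdjointMate_comp_evaluation f

lemma lmate_mate {X Y : C} (f : X ⟶ Y) :
    @leftAdjointMate C _ _ (Pivotal.dual Y) (Pivotal.dual X) (altL Y) (altL X)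
      (rightAdjointMate f) = f := by
  dsimp only [leftAdjointMate, altL]
  calc
    _ = 𝟙 X ⊗≫ ((η_ Y (Pivotal.dual Y) ≫ Y ◁ rightAdjointMate f) ▷ X) ⊗≫
          (Y ◁ ε_ X (Pivotal.dual X)) ⊗≫ 𝟙 Y := by monoidal
    _ = 𝟙 X ⊗≫ ((η_ X (Pivotal.dual X) ≫ f ▷ Pivotal.dual X) ▷ X) ⊗≫
          (Y ◁ ε_ X (Pivotal.dual X)) ⊗≫ 𝟙 Y := by rw [coev_comp_mate]
    _ = 𝟙 X ⊗≫ (η_ X (Pivotal.dual X) ▷ X) ⊗≫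
          (f ▷ (Pivotal.dual X ⊗ X) ≫ Y ◁ ε_ X (Pivotal.dual X)) ⊗≫ 𝟙 Y := by monoidal
    _ = 𝟙 X ⊗≫ (η_ X (Pivotal.dual X) ▷ X) ⊗≫
          (X ◁ ε_ X (Pivotal.dual X) ≫ f ▷ 𝟙_ C) ⊗≫ 𝟙 Y := by rw [← whisker_exchange]
    _ = 𝟙 X ⊗≫ (η_ X (Pivotal.dual X) ▷ X ⊗≫ X ◁ ε_ X (Pivotal.dual X)) ⊗≫ f ⊗≫ 𝟙 Y := by
          monoidal
    _ = f := by rw [ExactPairing.evaluation_coevaluation'']; monoidal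

/-- The canonical isomorphism `X ≅ X**`. -/
noncomputable def ddIso (X : C) : X ≅ Pivotal.dual (Pivotal.dual X) :=
  @leftDualIso C _ _ X (Pivotal.dual (Pivotal.dual X)) (Pivotal.dual X)
    (pivR X) (pivL (Pivotal.dual X))

lemma ddIso_natural {X Y : C} (f : X ⟶ Y) :
    f ≫ (ddIso Y).hom = (ddIso X).hom ≫ (fᘁ)ᘁ := by
  have hR : ((fᘁ)ᘁ : Pivotal.dual (Pivotal.dual X) ⟶ Pivotal.dual (Pivotal.dual Y))
      = (ᘁ(fᘁ)) := mate_eq_lmate _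
  have h1 := @comp_leftAdjointMate C _ _ (Pivotal.dual Y) (Pivotal.dual X) (Pivotal.dual X)
    (pivHasLeftDual (Pivotal.dual Y)) (pivHasLeftDual (Pivotal.dual X)) (altL X)
    (fᘁ) (𝟙 (Pivotal.dual X))
  have h2 := @comp_leftAdjointMate C _ _ (Pivotal.dual Y) (Pivotal.dual Y) (Pivotal.dual X)
    (pivHasLeftDual (Pivotal.dual Y)) (altL Y) (altL X)
    (𝟙 (Pivotal.dual Y)) (fᘁ)
  rw [Category.comp_id] at h1
  rw [Category.id_comp] at h2
  rw [lmate_mate] at h2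
  have e1 : (ddIso X).hom
      = @leftAdjointMate C _ _ (Pivotal.dual X) (Pivotal.dual X)
          (pivHasLeftDual (Pivotal.dual X)) (altL X) (𝟙 (Pivotal.dual X)) := rfl
  have e2 : (ddIso Y).hom
      = @leftAdjointMate C _ _ (Pivotal.dual Y) (Pivotal.dual Y)
          (pivHasLeftDual (Pivotal.dual Y)) (altL Y) (𝟙 (Pivotal.dual Y)) := rfl
  rw [e1, e2, hR]
  exact h2.symm.trans h1

/-- The pairing between `X ⊗ Y` and `Y* ⊗ X*`. -/
noncomputable instance tensorPairing (X Y : C) :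
    ExactPairing (X ⊗ Y) (Pivotal.dual Y ⊗ Pivotal.dual X) where
  coevaluation' :=
    η_ X (Pivotal.dual X) ⊗≫ (X ◁ η_ Y (Pivotal.dual Y) ▷ Pivotal.dual X) ⊗≫ 𝟙 _
  evaluation' :=
    𝟙 _ ⊗≫ (Pivotal.dual Y ◁ ε_ X (Pivotal.dual X) ▷ Y) ⊗≫ ε_ Y (Pivotal.dual Y)
  coevaluation_evaluation' := by
    calc
      _ = 𝟙 _ ⊗≫ ((Pivotal.dual Y ⊗ Pivotal.dual X : C) ◁ η_ X (Pivotal.dual X))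
          ⊗≫ (((Pivotal.dual Y ⊗ (Pivotal.dual X ⊗ X) : C) ◁ η_ Y (Pivotal.dual Y)
                ≫ (Pivotal.dual Y ◁ ε_ X (Pivotal.dual X)) ▷ (Y ⊗ Pivotal.dual Y : C))
              ▷ Pivotal.dual X)
          ⊗≫ (ε_ Y (Pivotal.dual Y) ▷ (Pivotal.dual Y ⊗ Pivotal.dual X : C)) ⊗≫ 𝟙 _ := by
            monoidal
      _ = 𝟙 _ ⊗≫ (Pivotal.dual Y ◁ (Pivotal.dual X ◁ η_ X (Pivotal.dual X)
              ⊗≫ ε_ X (Pivotal.dual X) ▷ Pivotal.dual X))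
          ⊗≫ ((Pivotal.dual Y ◁ η_ Y (Pivotal.dual Y)
              ⊗≫ ε_ Y (Pivotal.dual Y) ▷ Pivotal.dual Y) ▷ Pivotal.dual X) ⊗≫ 𝟙 _ := by
            rw [whisker_exchange]; monoidal
      _ = _ := by
            rw [ExactPairing.coevaluation_evaluation'', ExactPairing.coevaluation_evaluation'']
            monoidal
  evaluation_coevaluation' := by
    calc
      _ = 𝟙 _ ⊗≫ (η_ X (Pivotal.dual X) ▷ (X ⊗ Y : C))
          ⊗≫ (((X ◁ η_ Y (Pivotal.dual Y)) ▷ (Pivotal.dual X ⊗ X : C)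
                ≫ (X ⊗ (Y ⊗ Pivotal.dual Y) : C) ◁ ε_ X (Pivotal.dual X)) ▷ Y)
          ⊗≫ ((X ⊗ Y : C) ◁ ε_ Y (Pivotal.dual Y)) ⊗≫ 𝟙 _ := by
            monoidal
      _ = 𝟙 _ ⊗≫ ((η_ X (Pivotal.dual X) ▷ X ⊗≫ X ◁ ε_ X (Pivotal.dual X)) ▷ Y)
          ⊗≫ (X ◁ (η_ Y (Pivotal.dual Y) ▷ Y ⊗≫ Y ◁ ε_ Y (Pivotal.dual Y))) ⊗≫ 𝟙 _ := by
            rw [← whisker_exchange]; monoidal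
      _ = _ := by
            rw [ExactPairing.evaluation_coevaluation'', ExactPairing.evaluation_coevaluation'']
            monoidal

/-- `Y* ⊗ X*` as a right dual of `X ⊗ Y`. -/
noncomputable def tDual (X Y : C) : HasRightDual (X ⊗ Y) :=
  @HasRightDual.mk C _ _ (X ⊗ Y) (Pivotal.dual Y ⊗ Pivotal.dual X) (tensorPairing X Y)

lemma mate_unique' {X Y : C} [HasRightDual X] [HasRightDual Y] (h : X ⟶ Y) (u : (Yᘁ : C) ⟶ Xᘁ)
    (w : u ▷ X ≫ ε_ X (Xᘁ) = ((Yᘁ : C) ◁ h) ≫ ε_ Y (Yᘁ)) : u = hᘁ := by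
  have h2 := congrArg (tensorRightHomEquiv (Yᘁ : C) X (Xᘁ) (𝟙_ C)) w
  rw [tensorRightHomEquiv_whiskerRight_comp_evaluation,
    tensorRightHomEquiv_whiskerLeft_comp_evaluation] at h2
  exact (cancel_mono (λ_ _).inv).mp h2

lemma tensor_mate_pt {X Y : C} (f : X ⟶ X) (g : Y ⟶ Y) :
    @rightAdjointMate C _ _ (X ⊗ Y) (X ⊗ Y) (tDual X Y) (tDual X Y) (f ⊗ₘ g)
      = rightAdjointMate g ⊗ₘ rightAdjointMate f := by
  refine (@mate_unique' C _ _ _ (X ⊗ Y) (X ⊗ Y) (tDual X Y) (tDual X Y) (f ⊗ₘ g)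
    (rightAdjointMate g ⊗ₘ rightAdjointMate f) ?_).symm
  show (rightAdjointMate g ⊗ₘ rightAdjointMate f) ▷ (X ⊗ Y)
      ≫ (𝟙 _ ⊗≫ (Pivotal.dual Y ◁ ε_ X (Pivotal.dual X) ▷ Y) ⊗≫ ε_ Y (Pivotal.dual Y))
    = ((Pivotal.dual Y ⊗ Pivotal.dual X : C) ◁ (f ⊗ₘ g))
      ≫ (𝟙 _ ⊗≫ (Pivotal.dual Y ◁ ε_ X (Pivotal.dual X) ▷ Y) ⊗≫ ε_ Y (Pivotal.dual Y))
  calc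
    _ = 𝟙 _ ⊗≫ (rightAdjointMate g ▷ ((Pivotal.dual X ⊗ X) ⊗ Y : C)
          ≫ Pivotal.dual Y ◁ ((rightAdjointMate f ▷ X ≫ ε_ X (Pivotal.dual X)) ▷ Y))
        ⊗≫ ε_ Y (Pivotal.dual Y) ⊗≫ 𝟙 _ := by
          rw [MonoidalCategory.tensorHom_def]; monoidal
    _ = 𝟙 _ ⊗≫ (rightAdjointMate g ▷ ((Pivotal.dual X ⊗ X) ⊗ Y : C)
          ≫ Pivotal.dual Y ◁ ((Pivotal.dual X ◁ f ≫ ε_ X (Pivotal.dual X)) ▷ Y))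
        ⊗≫ ε_ Y (Pivotal.dual Y) ⊗≫ 𝟙 _ := by
          rw [mate_comp_ev]
    _ = 𝟙 _ ⊗≫ (Pivotal.dual Y ◁ ((Pivotal.dual X ◁ f ≫ ε_ X (Pivotal.dual X)) ▷ Y)
          ≫ rightAdjointMate g ▷ (𝟙_ C ⊗ Y : C))
        ⊗≫ ε_ Y (Pivotal.dual Y) ⊗≫ 𝟙 _ := by
          rw [whisker_exchange]; rfl
    _ = 𝟙 _ ⊗≫ (Pivotal.dual Y ◁ ((Pivotal.dual X ◁ f ≫ ε_ X (Pivotal.dual X)) ▷ Y))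
        ⊗≫ (rightAdjointMate g ▷ Y ≫ ε_ Y (Pivotal.dual Y)) ⊗≫ 𝟙 _ := by
          monoidal
    _ = 𝟙 _ ⊗≫ (Pivotal.dual Y ◁ ((Pivotal.dual X ◁ f ≫ ε_ X (Pivotal.dual X)) ▷ Y))
        ⊗≫ (Pivotal.dual Y ◁ g ≫ ε_ Y (Pivotal.dual Y)) ⊗≫ 𝟙 _ := by
          rw [mate_comp_ev]
    _ = 𝟙 _ ⊗≫ ((Pivotal.dual Y ◁ (Pivotal.dual X ◁ f ≫ ε_ X (Pivotal.dual X))) ▷ Y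
          ≫ (Pivotal.dual Y ⊗ 𝟙_ C : C) ◁ g)
        ⊗≫ ε_ Y (Pivotal.dual Y) ⊗≫ 𝟙 _ := by
          monoidal
    _ = 𝟙 _ ⊗≫ ((Pivotal.dual Y ⊗ (Pivotal.dual X ⊗ X) : C) ◁ g
          ≫ (Pivotal.dual Y ◁ (Pivotal.dual X ◁ f ≫ ε_ X (Pivotal.dual X))) ▷ Y)
        ⊗≫ ε_ Y (Pivotal.dual Y) ⊗≫ 𝟙 _ := by
          rw [whisker_exchange]
    _ = _ := by
          rw [MonoidalCategory.tensorHom_def']; monoidal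

/-- The canonical isomorphism `Y* ⊗ X* ≅ (X ⊗ Y)*`. -/
noncomputable def tIso (X Y : C) :
    (Pivotal.dual Y ⊗ Pivotal.dual X) ≅ Pivotal.dual (X ⊗ Y) :=
  rightDualIso (tensorPairing X Y) (pivR (X ⊗ Y))

lemma tensor_mate {X Y : C} (f : X ⟶ X) (g : Y ⟶ Y) :
    (tIso X Y).hom ≫ rightAdjointMate (f ⊗ₘ g) ≫ (tIso X Y).inv
      = rightAdjointMate g ⊗ₘ rightAdjointMate f := by
  have ha := @comp_rightAdjointMate C _ _ (X ⊗ Y) (X ⊗ Y) (X ⊗ Y)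
    (tDual X Y) (pivHasRightDual (X ⊗ Y)) (tDual X Y) (𝟙 (X ⊗ Y)) (f ⊗ₘ g)
  have hb := @comp_rightAdjointMate C _ _ (X ⊗ Y) (X ⊗ Y) (X ⊗ Y)
    (pivHasRightDual (X ⊗ Y)) (pivHasRightDual (X ⊗ Y)) (tDual X Y) (f ⊗ₘ g) (𝟙 (X ⊗ Y))
  rw [Category.id_comp] at ha
  rw [Category.comp_id] at hb
  have e1 : (tIso X Y).inv
      = @rightAdjointMate C _ _ (X ⊗ Y) (X ⊗ Y) (tDual X Y) (pivHasRightDual (X ⊗ Y))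
          (𝟙 (X ⊗ Y)) := rfl
  have e2 : (tIso X Y).hom
      = @rightAdjointMate C _ _ (X ⊗ Y) (X ⊗ Y) (pivHasRightDual (X ⊗ Y)) (tDual X Y)
          (𝟙 (X ⊗ Y)) := rfl
  rw [← tensor_mate_pt f g, ha, hb, ← e1, ← e2]
  exact (Category.assoc _ _ _).symm

end PivotalAux

section FusionAux

variable {k : Type w} [CommRing k] {G : Type x} [Group G]
variable {C : Type u} [Category.{v} C] [MonoidalCategory C] [Pivotal C]
  [Preadditive C] [CategoryTheory.Linear k C] [MonoidalPreadditive C] [MonoidalLinear k C]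
variable (k) (gr : GGraded G C)

/-- A choice of grade for a homogeneous object. -/
noncomputable def hdeg (p : Homog gr) : G := p.2.choose

lemma hmem (p : Homog gr) : gr.mem p.1 (hdeg gr p) := p.2.choose_spec

lemma fcls_congr {X : C} {a b : G} (h1 : gr.mem X a) (h2 : gr.mem X b) (f : X ⟶ X) :
    fcls k gr X h1 f = fcls k gr X h2 f := rfl

lemma fcls_add {X : C} {a : G} (hX : gr.mem X a) (f g : X ⟶ X) :
    fcls k gr X hX (f + g) = fcls k gr X hX f + fcls k gr X hX g := by
  simp only [fcls, lofh, map_add, ← Submodule.Quotient.mk_add]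

lemma fcls_smul {X : C} {a : G} (hX : gr.mem X a) (c : k) (f : X ⟶ X) :
    fcls k gr X hX (c • f) = c • fcls k gr X hX f := by
  simp only [fcls, lofh, map_smul, ← Submodule.Quotient.mk_smul]

lemma fcls_rel {A B : C} {a : G} (hA : gr.mem A a) (hB : gr.mem B a)
    (u : B ⟶ A) (w : A ⟶ B) :
    fcls k gr A hA (w ≫ u) = fcls k gr B hB (u ≫ w) := by
  rw [fcls, fcls, Submodule.Quotient.eq]
  exact Submodule.subset_span ⟨A, B, a, hA, hB, u, w, rfl⟩

lemma fcls_conj {A B : C} {a : G} (hA : gr.mem A a) (hB : gr.mem B a)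
    (e : A ≅ B) (m : A ⟶ A) :
    fcls k gr A hA m = fcls k gr B hB (e.inv ≫ m ≫ e.hom) := by
  have h := fcls_rel k gr hA hB e.inv (m ≫ e.hom)
  simpa using h

lemma fusion_induction {P : FusionL k gr → Prop}
    (h0 : P 0) (hadd : ∀ u v, P u → P v → P (u + v))
    (hsmul : ∀ (c : k) u, P u → P (c • u))
    (hgen : ∀ (X : C) (a : G) (hX : gr.mem X a) (f : X ⟶ X), P (fcls k gr X hX f)) :
    ∀ x, P x := by
  intro x
  obtain ⟨y, rfl⟩ := Submodule.Quotient.mk_surjective _ x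
  letI := Classical.decEq (Homog gr)
  induction y using DirectSum.induction_on with
  | zero => simpa using h0
  | of p f => exact hgen p.1 (hdeg gr p) (hmem gr p) f
  | add u v hu hv => rw [Submodule.Quotient.mk_add]; exact hadd _ _ hu hv

lemma smul_tensor' (c : k) {X X' Y Y' : C} (f : X ⟶ X') (g : Y ⟶ Y') :
    (c • f) ⊗ₘ g = c • (f ⊗ₘ g) := by
  simp [MonoidalCategory.tensorHom_def]

lemma tensor_smul' (c : k) {X X' Y Y' : C} (f : X ⟶ X') (g : Y ⟶ Y') :
    f ⊗ₘ (c • g) = c • (f ⊗ₘ g) := by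
  simp [MonoidalCategory.tensorHom_def]

/-- The bilinear map `(f, g) ↦ ⟨X ⊗ Y, f ⊗ g⟩`. -/
noncomputable def bil (p q : Homog gr) :
    (p.1 ⟶ p.1) →ₗ[k] (q.1 ⟶ q.1) →ₗ[k] FusionL k gr :=
  LinearMap.mk₂ k
    (fun f g => fcls k gr (p.1 ⊗ q.1) (gr.tensor_mem (hmem gr p) (hmem gr q)) (f ⊗ₘ g))
    (fun f f' g => by simp only [MonoidalPreadditive.add_tensor, fcls_add])
    (fun c f g => by simp only [smul_tensor', fcls_smul])
    (fun f g g' => by simp only [MonoidalPreadditive.tensor_add, fcls_add])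
    (fun c f g => by simp only [tensor_smul', fcls_smul])

/-- Multiplication on `Ltilde`. -/
noncomputable def M2 : Ltilde gr →ₗ[k] Ltilde gr →ₗ[k] FusionL k gr :=
  letI := Classical.decEq (Homog gr)
  DirectSum.toModule k _ _ fun p =>
    LinearMap.flip (DirectSum.toModule k _ _ fun q => LinearMap.flip (bil k gr p q))

lemma M2_lofh {X Y : C} {a b : G} (hX : gr.mem X a) (hY : gr.mem Y b)
    (f : X ⟶ X) (g : Y ⟶ Y) :
    M2 k gr (lofh k gr X hX f) (lofh k gr Y hY g)
      = fcls k gr (X ⊗ Y) (gr.tensor_mem hX hY) (f ⊗ₘ g) := by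
  letI := Classical.decEq (Homog gr)
  rw [lofh, lofh, M2]
  erw [DirectSum.toModule_lof, LinearMap.flip_apply, DirectSum.toModule_lof,
    LinearMap.flip_apply]
  rfl

lemma rel_le_ker_M2 : fusionRel k gr ≤ LinearMap.ker (M2 k gr) := by
  letI := Classical.decEq (Homog gr)
  apply Submodule.span_le.mpr
  rintro x ⟨A, B, a, hA, hB, u, w, rfl⟩
  simp only [SetLike.mem_coe, LinearMap.mem_ker, map_sub]
  rw [sub_eq_zero]
  refine DirectSum.linearMap_ext _ fun q => ?_
  ext h
  show M2 k gr (lofh k gr A hA (w ≫ u)) (DirectSum.lof k _ _ q h)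
      = M2 k gr (lofh k gr B hB (u ≫ w)) (DirectSum.lof k _ _ q h)
  have h1 := M2_lofh k gr hA (hmem gr q) (w ≫ u) h
  have h2 := M2_lofh k gr hB (hmem gr q) (u ≫ w) h
  have h3 := fcls_rel k gr (gr.tensor_mem hA (hmem gr q)) (gr.tensor_mem hB (hmem gr q))
    (u ⊗ₘ 𝟙 q.1) (w ⊗ₘ h)
  rw [tensorHom_comp_tensorHom, tensorHom_comp_tensorHom, Category.comp_id, Category.id_comp] at h3
  calc M2 k gr (lofh k gr A hA (w ≫ u)) (DirectSum.lof k _ _ q h)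
      = fcls k gr (A ⊗ q.1) (gr.tensor_mem hA (hmem gr q)) ((w ≫ u) ⊗ₘ h) := h1
    _ = fcls k gr (B ⊗ q.1) (gr.tensor_mem hB (hmem gr q)) ((u ≫ w) ⊗ₘ h) := h3
    _ = M2 k gr (lofh k gr B hB (u ≫ w)) (DirectSum.lof k _ _ q h) := h2.symm

lemma rel_le_ker_M2flip : fusionRel k gr ≤ LinearMap.ker (M2 k gr).flip := by
  letI := Classical.decEq (Homog gr)
  apply Submodule.span_le.mpr
  rintro x ⟨A, B, a, hA, hB, u, w, rfl⟩
  simp only [SetLike.mem_coe, LinearMap.mem_ker, map_sub]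
  rw [sub_eq_zero]
  refine DirectSum.linearMap_ext _ fun q => ?_
  ext h
  show M2 k gr (DirectSum.lof k _ _ q h) (lofh k gr A hA (w ≫ u))
      = M2 k gr (DirectSum.lof k _ _ q h) (lofh k gr B hB (u ≫ w))
  have h1 := M2_lofh k gr (hmem gr q) hA h (w ≫ u)
  have h2 := M2_lofh k gr (hmem gr q) hB h (u ≫ w)
  have h3 := fcls_rel k gr (gr.tensor_mem (hmem gr q) hA) (gr.tensor_mem (hmem gr q) hB)
    (𝟙 q.1 ⊗ₘ u) (h ⊗ₘ w)
  rw [tensorHom_comp_tensorHom, tensorHom_comp_tensorHom, Category.comp_id, Category.id_comp] at h3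
  calc M2 k gr (DirectSum.lof k _ _ q h) (lofh k gr A hA (w ≫ u))
      = fcls k gr (q.1 ⊗ A) (gr.tensor_mem (hmem gr q) hA) (h ⊗ₘ (w ≫ u)) := h1
    _ = fcls k gr (q.1 ⊗ B) (gr.tensor_mem (hmem gr q) hB) (h ⊗ₘ (u ≫ w)) := h3
    _ = M2 k gr (DirectSum.lof k _ _ q h) (lofh k gr B hB (u ≫ w)) := h2.symm

/-- Multiplication, descended in the first variable. -/
noncomputable def mulA : FusionL k gr →ₗ[k] Ltilde gr →ₗ[k] FusionL k gr :=
  (fusionRel k gr).liftQ (M2 k gr) (rel_le_ker_M2 k gr)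

lemma rel_le_ker_mulAflip : fusionRel k gr ≤ LinearMap.ker (mulA k gr).flip := by
  intro r hr
  rw [LinearMap.mem_ker]
  apply LinearMap.ext
  intro x
  obtain ⟨y, rfl⟩ := Submodule.Quotient.mk_surjective _ x
  show mulA k gr (Submodule.Quotient.mk y) r = 0
  rw [mulA, Submodule.liftQ_apply]
  have h0 := rel_le_ker_M2flip k gr hr
  rw [LinearMap.mem_ker] at h0
  calc M2 k gr y r = ((M2 k gr).flip r) y := rfl
    _ = 0 := by rw [h0]; rfl

/-- The multiplication of the fusion algebra. -/
noncomputable def mulL : FusionL k gr →ₗ[k] FusionL k gr →ₗ[k] FusionL k gr :=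
  ((fusionRel k gr).liftQ (mulA k gr).flip (rel_le_ker_mulAflip k gr)).flip

lemma mulL_fcls {X Y : C} {a b : G} (hX : gr.mem X a) (hY : gr.mem Y b)
    (f : X ⟶ X) (g : Y ⟶ Y) :
    mulL k gr (fcls k gr X hX f) (fcls k gr Y hY g)
      = fcls k gr (X ⊗ Y) (gr.tensor_mem hX hY) (f ⊗ₘ g) := by
  rw [mulL, fcls, fcls, LinearMap.flip_apply, Submodule.liftQ_apply, LinearMap.flip_apply,
    mulA, Submodule.liftQ_apply, M2_lofh]

lemma dualHom_add {X Y : C} (f g : X ⟶ Y) :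
    Pivotal.dualHom (f + g) = Pivotal.dualHom f + Pivotal.dualHom g := by
  simp [Pivotal.dualHom]

lemma dualHom_smul' (c : k) {X Y : C} (f : X ⟶ Y) :
    Pivotal.dualHom (c • f) = c • Pivotal.dualHom f := by
  simp [Pivotal.dualHom]

lemma dualHom_comp {X Y Z : C} (f : X ⟶ Y) (g : Y ⟶ Z) :
    Pivotal.dualHom (f ≫ g) = Pivotal.dualHom g ≫ Pivotal.dualHom f := by
  rw [dualHom_eq_mate, dualHom_eq_mate, dualHom_eq_mate, ← comp_rightAdjointMate]

/-- The star map on `Ltilde`. -/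
noncomputable def stT : Ltilde gr →ₗ[k] FusionL k gr :=
  letI := Classical.decEq (Homog gr)
  DirectSum.toModule k _ _ fun p =>
    { toFun := fun f =>
        fcls k gr (Pivotal.dual p.1) (gr.dual_mem (hmem gr p)) (Pivotal.dualHom f)
      map_add' := fun f g => by simp only [dualHom_add, fcls_add]
      map_smul' := fun c f => by simp only [RingHom.id_apply, dualHom_smul', fcls_smul] }

lemma stT_lofh {X : C} {a : G} (hX : gr.mem X a) (f : X ⟶ X) :
    stT k gr (lofh k gr X hX f)
      = fcls k gr (Pivotal.dual X) (gr.dual_mem hX) (Pivotal.dualHom f) := by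
  letI := Classical.decEq (Homog gr)
  rw [lofh, stT]
  erw [DirectSum.toModule_lof]
  rfl

lemma rel_le_ker_stT : fusionRel k gr ≤ LinearMap.ker (stT k gr) := by
  apply Submodule.span_le.mpr
  rintro x ⟨A, B, a, hA, hB, u, w, rfl⟩
  simp only [SetLike.mem_coe, LinearMap.mem_ker, map_sub]
  rw [sub_eq_zero, stT_lofh k gr hA, stT_lofh k gr hB, dualHom_comp, dualHom_comp]
  have h3 := fcls_rel k gr (gr.dual_mem hA) (gr.dual_mem hB)
    (Pivotal.dualHom w) (Pivotal.dualHom u)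
  exact h3

/-- The star map of the fusion algebra. -/
noncomputable def stQ : FusionL k gr →ₗ[k] FusionL k gr :=
  (fusionRel k gr).liftQ (stT k gr) (rel_le_ker_stT k gr)

lemma stQ_fcls {X : C} {a : G} (hX : gr.mem X a) (f : X ⟶ X) :
    stQ k gr (fcls k gr X hX f)
      = fcls k gr (Pivotal.dual X) (gr.dual_mem hX) (Pivotal.dualHom f) := by
  rw [stQ, fcls, Submodule.liftQ_apply, stT_lofh]

lemma mulL_assoc (x y z : FusionL k gr) :
    mulL k gr (mulL k gr x y) z = mulL k gr x (mulL k gr y z) := by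
  induction x using fusion_induction k gr with
  | h0 => simp
  | hadd u v hu hv => simp only [map_add, LinearMap.add_apply, hu, hv]
  | hsmul c u hu => simp only [map_smul, LinearMap.smul_apply, hu]
  | hgen X a hX f =>
    induction y using fusion_induction k gr with
    | h0 => simp
    | hadd u v hu hv => simp only [map_add, LinearMap.add_apply, hu, hv]
    | hsmul c u hu => simp only [map_smul, LinearMap.smul_apply, hu]
    | hgen Y b hY g =>
      induction z using fusion_induction k gr with
      | h0 => simp
      | hadd u v hu hv => simp only [map_add, hu, hv]
      | hsmul c u hu => simp only [map_smul, hu]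
      | hgen Z c hZ h =>
        rw [mulL_fcls, mulL_fcls, mulL_fcls, mulL_fcls]
        have hB : gr.mem (X ⊗ (Y ⊗ Z)) ((a * b) * c) := by
          rw [mul_assoc]; exact gr.tensor_mem hX (gr.tensor_mem hY hZ)
        have e := fcls_conj k gr (gr.tensor_mem (gr.tensor_mem hX hY) hZ) hB
          (α_ X Y Z) ((f ⊗ₘ g) ⊗ₘ h)
        rw [e, associator_naturality, Iso.inv_hom_id_assoc]
        exact fcls_congr k gr hB (gr.tensor_mem hX (gr.tensor_mem hY hZ)) _

lemma mulL_one_left (x : FusionL k gr) :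
    mulL k gr (fcls k gr (𝟙_ C) gr.unit_mem (𝟙 (𝟙_ C))) x = x := by
  induction x using fusion_induction k gr with
  | h0 => simp
  | hadd u v hu hv => simp only [map_add, hu, hv]
  | hsmul c u hu => simp only [map_smul, hu]
  | hgen X a hX f =>
    rw [mulL_fcls]
    have hA : gr.mem (𝟙_ C ⊗ X) a := by
      have := gr.tensor_mem gr.unit_mem hX; rwa [one_mul] at this
    rw [fcls_congr k gr (gr.tensor_mem gr.unit_mem hX) hA]
    have e := fcls_conj k gr hA hX (λ_ X) (𝟙 (𝟙_ C) ⊗ₘ f)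
    rw [e]
    have h2 : (λ_ X).inv ≫ ((𝟙 (𝟙_ C) ⊗ₘ f) ≫ (λ_ X).hom) = f := by
      simp
    rw [h2]

lemma mulL_one_right (x : FusionL k gr) :
    mulL k gr x (fcls k gr (𝟙_ C) gr.unit_mem (𝟙 (𝟙_ C))) = x := by
  induction x using fusion_induction k gr with
  | h0 => simp
  | hadd u v hu hv => simp only [map_add, LinearMap.add_apply, hu, hv]
  | hsmul c u hu => simp only [map_smul, LinearMap.smul_apply, hu]
  | hgen X a hX f =>
    rw [mulL_fcls]
    have hA : gr.mem (X ⊗ 𝟙_ C) a := by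
      have := gr.tensor_mem hX gr.unit_mem; rwa [mul_one] at this
    rw [fcls_congr k gr (gr.tensor_mem hX gr.unit_mem) hA]
    have e := fcls_conj k gr hA hX (ρ_ X) (f ⊗ₘ 𝟙 (𝟙_ C))
    rw [e]
    have h2 : (ρ_ X).inv ≫ ((f ⊗ₘ 𝟙 (𝟙_ C)) ≫ (ρ_ X).hom) = f := by
      simp
    rw [h2]

lemma stQ_stQ_fcls {X : C} {a : G} (hX : gr.mem X a) (f : X ⟶ X) :
    stQ k gr (stQ k gr (fcls k gr X hX f)) = fcls k gr X hX f := by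
  rw [stQ_fcls, stQ_fcls, dualHom_eq_mate, dualHom_eq_mate]
  have hA : gr.mem (Pivotal.dual (Pivotal.dual X)) a := by
    have := gr.dual_mem (gr.dual_mem hX); rwa [inv_inv] at this
  rw [fcls_congr k gr (gr.dual_mem (gr.dual_mem hX)) hA]
  have e := fcls_conj k gr hA hX (ddIso X).symm
    (rightAdjointMate (rightAdjointMate f))
  rw [e]
  simp only [Iso.symm_hom, Iso.symm_inv]
  have hnat : (ddIso X).hom ≫ (rightAdjointMate (rightAdjointMate f) ≫ (ddIso X).inv)
      = f := by
    rw [← Category.assoc, ← ddIso_natural f, Category.assoc, Iso.hom_inv_id,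
      Category.comp_id]
  rw [hnat]

lemma stQ_invol (x : FusionL k gr) : stQ k gr (stQ k gr x) = x := by
  induction x using fusion_induction k gr with
  | h0 => simp
  | hadd u v hu hv => simp only [map_add, hu, hv]
  | hsmul c u hu => simp only [map_smul, hu]
  | hgen X a hX f => exact stQ_stQ_fcls k gr hX f

lemma stQ_antihom (x y : FusionL k gr) :
    stQ k gr (mulL k gr x y) = mulL k gr (stQ k gr y) (stQ k gr x) := by
  induction x using fusion_induction k gr with
  | h0 => simp
  | hadd u v hu hv => simp only [map_add, LinearMap.add_apply, hu, hv]
  | hsmul c u hu => simp only [map_smul, LinearMap.smul_apply, hu]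
  | hgen X a hX f =>
    induction y using fusion_induction k gr with
    | h0 => simp
    | hadd u v hu hv => simp only [map_add, LinearMap.add_apply, hu, hv]
    | hsmul c u hu => simp only [map_smul, LinearMap.smul_apply, hu]
    | hgen Y b hY g =>
      rw [mulL_fcls, stQ_fcls, stQ_fcls, stQ_fcls, mulL_fcls,
        dualHom_eq_mate, dualHom_eq_mate, dualHom_eq_mate]
      have hB : gr.mem (Pivotal.dual Y ⊗ Pivotal.dual X) (a * b)⁻¹ := by
        rw [mul_inv_rev]; exact gr.tensor_mem (gr.dual_mem hY) (gr.dual_mem hX)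
      have e := fcls_conj k gr (gr.dual_mem (gr.tensor_mem hX hY)) hB
        (tIso X Y).symm (rightAdjointMate (f ⊗ₘ g))
      rw [e]
      simp only [Iso.symm_hom, Iso.symm_inv]
      rw [tensor_mate]
      exact fcls_congr k gr hB (gr.tensor_mem (gr.dual_mem hY) (gr.dual_mem hX)) _

lemma mulL_graded (a b : G) (x y : FusionL k gr)
    (hx : x ∈ FusionLsub k gr a) (hy : y ∈ FusionLsub k gr b) :
    mulL k gr x y ∈ FusionLsub k gr (a * b) := by
  induction hx using Submodule.span_induction with
  | mem x hxg =>
    induction hy using Submodule.span_induction with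
    | mem y hyg =>
      obtain ⟨X, hX, f, rfl⟩ := hxg
      obtain ⟨Y, hY, g, rfl⟩ := hyg
      rw [mulL_fcls]
      exact Submodule.subset_span ⟨X ⊗ Y, gr.tensor_mem hX hY, f ⊗ₘ g, rfl⟩
    | zero => simp
    | add u v _ _ hu hv => rw [map_add]; exact add_mem hu hv
    | smul c u _ hu => rw [map_smul]; exact Submodule.smul_mem _ _ hu
  | zero => simp
  | add u v _ _ hu hv => rw [map_add, LinearMap.add_apply]; exact add_mem hu hv
  | smul c u _ hu => rw [map_smul, LinearMap.smul_apply]; exact Submodule.smul_mem _ _ hu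

lemma fusion_sup_top : (⨆ a : G, FusionLsub k gr a) = ⊤ := by
  rw [eq_top_iff]
  intro x _
  refine fusion_induction k gr ?_ ?_ ?_ ?_ x
  · exact zero_mem _
  · exact fun u v hu hv => add_mem hu hv
  · exact fun c u hu => Submodule.smul_mem _ c hu
  · intro X a hX f
    exact le_iSup (fun a => FusionLsub k gr a) a
      (Submodule.subset_span ⟨X, hX, f, rfl⟩)

lemma stQ_map_sub (a : G) :
    Submodule.map (stQ k gr) (FusionLsub k gr a) = FusionLsub k gr a⁻¹ := by
  apply le_antisymm
  · rw [Submodule.map_le_iff_le_comap]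
    apply Submodule.span_le.mpr
    rintro x ⟨X, hX, f, rfl⟩
    simp only [SetLike.mem_coe, Submodule.mem_comap]
    rw [stQ_fcls]
    exact Submodule.subset_span ⟨Pivotal.dual X, gr.dual_mem hX, Pivotal.dualHom f, rfl⟩
  · apply Submodule.span_le.mpr
    rintro x ⟨Z, hZ, h, rfl⟩
    have hdz : gr.mem (Pivotal.dual Z) a := by
      have := gr.dual_mem hZ; rwa [inv_inv] at this
    refine Submodule.mem_map.mpr
      ⟨fcls k gr (Pivotal.dual Z) hdz (Pivotal.dualHom h), ?_, ?_⟩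
    · exact Submodule.subset_span ⟨Pivotal.dual Z, hdz, Pivotal.dualHom h, rfl⟩
    · have e1 : fcls k gr (Pivotal.dual Z) hdz (Pivotal.dualHom h)
          = stQ k gr (fcls k gr Z hZ h) := by
        rw [stQ_fcls]; exact fcls_congr k gr hdz (gr.dual_mem hZ) _
      rw [e1]
      exact stQ_invol k gr _

end FusionAux

section Statement

variable {k : Type w} [CommRing k] {G : Type x} [Group G]
variable {C : Type u} [Category.{v} C] [MonoidalCategory C] [Pivotal C]
  [Preadditive C] [CategoryTheory.Linear k C] [MonoidalPreadditive C] [MonoidalLinear k C]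

theorem statement15 (gr : GGraded G C) :
    ∃ (mul : FusionL k gr →ₗ[k] FusionL k gr →ₗ[k] FusionL k gr)
      (st : FusionL k gr →ₗ[k] FusionL k gr),
      -- multiplication of classes is induced by the monoidal product
      (∀ (X Y : C) (a b : G) (hX : gr.mem X a) (hY : gr.mem Y b) (f : X ⟶ X) (g : Y ⟶ Y),
        mul (fcls k gr X hX f) (fcls k gr Y hY g)
          = fcls k gr (X ⊗ Y) (gr.tensor_mem hX hY) (f ⊗ₘ g)) ∧
      -- associativity
      (∀ x y z : FusionL k gr, mul (mul x y) z = mul x (mul y z)) ∧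
      -- unit
      (∀ x : FusionL k gr, mul (fcls k gr (𝟙_ C) gr.unit_mem (𝟙 (𝟙_ C))) x = x) ∧
      (∀ x : FusionL k gr, mul x (fcls k gr (𝟙_ C) gr.unit_mem (𝟙 (𝟙_ C))) = x) ∧
      -- the multiplication is G-graded
      (∀ (a b : G) (x y : FusionL k gr), x ∈ FusionLsub k gr a → y ∈ FusionLsub k gr b →
        mul x y ∈ FusionLsub k gr (a * b)) ∧
      ((⨆ a : G, FusionLsub k gr a) = ⊤) ∧
      -- the star map sends ⟨X, f⟩ to ⟨X^*, f^*⟩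
      (∀ (X : C) (a : G) (hX : gr.mem X a) (f : X ⟶ X),
        st (fcls k gr X hX f) = fcls k gr (dual X) (gr.dual_mem hX) (dualHom f)) ∧
      -- star is an involutive algebra anti-automorphism
      (∀ x : FusionL k gr, st (st x) = x) ∧
      (∀ x y : FusionL k gr, st (mul x y) = mul (st y) (st x)) ∧
      -- star carries L_a onto L_{a⁻¹}
      (∀ a : G, Submodule.map st (FusionLsub k gr a) = FusionLsub k gr a⁻¹) := by
  refine ⟨mulL k gr, stQ k gr, ?_, ?_, ?_, ?_, ?_, ?_, ?_, ?_, ?_, ?_⟩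
  · intro X Y a b hX hY f g
    exact mulL_fcls k gr hX hY f g
  · exact mulL_assoc k gr
  · exact mulL_one_left k gr
  · exact mulL_one_right k gr
  · exact mulL_graded k gr
  · exact fusion_sup_top k gr
  · intro X a hX f
    exact stQ_fcls k gr hX f
  · exact stQ_invol k gr
  · exact stQ_antihom k gr
  · exact stQ_map_sub k gr

end Statement

end SurgeryHQFT
end

section
/- In a pre-fusion category, the left and right dimensions of any simple object are invertible elements of the ground ring k. -/
set_option linter.unusedSectionVars false

open CategoryTheory MonoidalCategory CategoryTheory.Limits

universe w x v u v₂ u₂ v₃ u₃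

namespace SurgeryHQFT

open Pivotal

section Statement

variable {k : Type w} [CommRing k]
variable {C : Type u} [Category.{v} C] [MonoidalCategory C] [Pivotal C]
  [Preadditive C] [CategoryTheory.Linear k C] [MonoidalPreadditive C] [MonoidalLinear k C]
  [HasFiniteBiproducts C]


private def epR (X : C) : ExactPairing X (Pivotal.dual X) where
  coevaluation' := Pivotal.coev X
  evaluation' := Pivotal.ev X
  coevaluation_evaluation' := by
    rw [← cancel_epi (ρ_ (Pivotal.dual X)).inv, ← cancel_mono (λ_ (Pivotal.dual X)).hom]
    simpa [Category.assoc] using Pivotal.zig₂ X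
  evaluation_coevaluation' := by
    rw [← cancel_epi (λ_ X).inv, ← cancel_mono (ρ_ X).hom]
    simpa [Category.assoc] using Pivotal.zig₁ X

private def epL (X : C) : ExactPairing (Pivotal.dual X) X where
  coevaluation' := Pivotal.coev' X
  evaluation' := Pivotal.ev' X
  coevaluation_evaluation' := by
    rw [← cancel_epi (ρ_ X).inv, ← cancel_mono (λ_ X).hom]
    simpa [Category.assoc] using Pivotal.zig₃ X
  evaluation_coevaluation' := by
    rw [← cancel_epi (λ_ (Pivotal.dual X)).inv, ← cancel_mono (ρ_ (Pivotal.dual X)).hom]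
    simpa [Category.assoc] using Pivotal.zig₄ X

private lemma key_unit (hC : PreFusion k C) (A : C) (cv : 𝟙_ C ⟶ A) (ew : A ⟶ 𝟙_ C)
    (h1 : ∀ g : 𝟙_ C ⟶ A, ∃ c : k, g = c • cv)
    (h2 : ∀ w : A ⟶ 𝟙_ C, ∃ c : k, w = c • ew)
    (h3 : cv = 0 → (1 : k) = 0) :
    ∃ c : k, IsUnit c ∧ cv ≫ ew = c • 𝟙 (𝟙_ C) := by
  obtain ⟨d, hd, -⟩ := hC.unit_simple (cv ≫ ew)
  refine ⟨d, ?_, hd⟩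
  obtain ⟨n, s, hs, ⟨h⟩⟩ := hC.semisimple A
  by_cases hiso : ∃ i, Nonempty (𝟙_ C ≅ s i)
  · obtain ⟨i, ⟨ψ⟩⟩ := hiso
    have hvw : (ψ.hom ≫ biproduct.ι s i ≫ h.inv) ≫ (h.hom ≫ biproduct.π s i ≫ ψ.inv)
        = 𝟙 (𝟙_ C) := by
      simp
    obtain ⟨e, he⟩ := h1 (ψ.hom ≫ biproduct.ι s i ≫ h.inv)
    obtain ⟨f, hf⟩ := h2 (h.hom ≫ biproduct.π s i ≫ ψ.inv)
    rw [he, hf] at hvw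
    rw [Linear.smul_comp, Linear.comp_smul, hd, smul_smul, smul_smul] at hvw
    obtain ⟨c₀, hc₀, hu⟩ := hC.unit_simple (𝟙 (𝟙_ C))
    have e1 : (1 : k) = c₀ := hu 1 (by simp)
    have e2 : e * f * d = c₀ := hu _ hvw.symm
    exact IsUnit.of_mul_eq_one (a := d) (e * f) (by rw [mul_comm]; rw [e2, ← e1])
  · push_neg at hiso
    have hz : cv ≫ h.hom = 0 := by
      apply biproduct.hom_ext
      intro j
      rw [zero_comp]
      exact hC.hom_vanish hC.unit_simple (hs j)
        (hiso j) _
    have hcv : cv = 0 := by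
      have := congrArg (fun t => t ≫ h.inv) hz
      simpa using this
    haveI : Subsingleton k := subsingleton_of_zero_eq_one (h3 hcv).symm
    exact isUnit_of_subsingleton d

private lemma one_eq_zero_of_id_zero (X : C) (hX : SimpleObj k X) (h : 𝟙 X = 0) :
    (1 : k) = 0 := by
  obtain ⟨c, hc, hu⟩ := hX (𝟙 X)
  have e1 : (1 : k) = c := hu 1 (by simp)
  have e2 : (0 : k) = c := hu 0 (by simp [h])
  rw [e1, e2]

private lemma h1R (X : C) (hX : SimpleObj k X) (g : 𝟙_ C ⟶ X ⊗ Pivotal.dual X) :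
    ∃ c : k, g = c • Pivotal.coev X := by
  letI := epR X
  set E := tensorRightHomEquiv (𝟙_ C) X (Pivotal.dual X) X with hE
  have hco : E.symm (Pivotal.coev X) = (λ_ X).hom := by
    rw [← cancel_epi (λ_ X).inv]
    have hz := Pivotal.zig₁ X
    simp [hE, tensorRightHomEquiv, ExactPairing.evaluation, Category.assoc] at hz ⊢
    exact hz
  obtain ⟨c, hc, -⟩ := hX ((λ_ X).inv ≫ E.symm g)
  refine ⟨c, ?_⟩
  have hsym : E.symm g = c • (λ_ X).hom := by
    rw [← cancel_epi (λ_ X).inv, hc]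
    simp [Linear.comp_smul]
  calc g = E (E.symm g) := (E.apply_symm_apply g).symm
    _ = E (c • (λ_ X).hom) := by rw [hsym]
    _ = c • E ((λ_ X).hom) := by simp [hE, tensorRightHomEquiv, Linear.comp_smul]
    _ = c • Pivotal.coev X := by rw [← hco, E.apply_symm_apply]

private lemma h2R (X : C) (hX : SimpleObj k X) (w : X ⊗ Pivotal.dual X ⟶ 𝟙_ C) :
    ∃ c : k, w = c • Pivotal.ev' X := by
  letI := epL X
  set E := tensorRightHomEquiv X (Pivotal.dual X) X (𝟙_ C) with hE
  have hco : E (Pivotal.ev' X) = (λ_ X).inv := by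
    rw [← cancel_mono (λ_ X).hom]
    have hz := Pivotal.zig₃ X
    simp [hE, tensorRightHomEquiv, ExactPairing.coevaluation, Category.assoc] at hz ⊢
    exact hz
  obtain ⟨c, hc, -⟩ := hX (E w ≫ (λ_ X).hom)
  refine ⟨c, ?_⟩
  have hsym : E w = c • (λ_ X).inv := by
    rw [← cancel_mono (λ_ X).hom, hc]
    simp [Linear.smul_comp]
  calc w = E.symm (E w) := (E.symm_apply_apply w).symm
    _ = E.symm (c • (λ_ X).inv) := by rw [hsym]
    _ = c • E.symm ((λ_ X).inv) := by simp [hE, tensorRightHomEquiv, Linear.smul_comp]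
    _ = c • Pivotal.ev' X := by rw [← hco, E.symm_apply_apply]

private lemma h1L (X : C) (hX : SimpleObj k X) (g : 𝟙_ C ⟶ Pivotal.dual X ⊗ X) :
    ∃ c : k, g = c • Pivotal.coev' X := by
  letI := epL X
  set E := tensorLeftHomEquiv (𝟙_ C) (Pivotal.dual X) X X with hE
  have hco : E.symm (Pivotal.coev' X) = (ρ_ X).hom := by
    rw [← cancel_epi (ρ_ X).inv]
    have hz := Pivotal.zig₃ X
    simp [hE, tensorLeftHomEquiv, ExactPairing.evaluation, Category.assoc] at hz ⊢
    exact hz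
  obtain ⟨c, hc, -⟩ := hX ((ρ_ X).inv ≫ E.symm g)
  refine ⟨c, ?_⟩
  have hsym : E.symm g = c • (ρ_ X).hom := by
    rw [← cancel_epi (ρ_ X).inv, hc]
    simp [Linear.comp_smul]
  calc g = E (E.symm g) := (E.apply_symm_apply g).symm
    _ = E (c • (ρ_ X).hom) := by rw [hsym]
    _ = c • E ((ρ_ X).hom) := by simp [hE, tensorLeftHomEquiv, Linear.comp_smul]
    _ = c • Pivotal.coev' X := by rw [← hco, E.apply_symm_apply]

private lemma h2L (X : C) (hX : SimpleObj k X) (w : Pivotal.dual X ⊗ X ⟶ 𝟙_ C) :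
    ∃ c : k, w = c • Pivotal.ev X := by
  letI := epR X
  set E := tensorLeftHomEquiv X X (Pivotal.dual X) (𝟙_ C) with hE
  have hco : E (Pivotal.ev X) = (ρ_ X).inv := by
    rw [← cancel_mono (ρ_ X).hom]
    have hz := Pivotal.zig₁ X
    simp [hE, tensorLeftHomEquiv, ExactPairing.coevaluation, Category.assoc] at hz ⊢
    exact hz
  obtain ⟨c, hc, -⟩ := hX (E w ≫ (ρ_ X).hom)
  refine ⟨c, ?_⟩
  have hsym : E w = c • (ρ_ X).inv := by
    rw [← cancel_mono (ρ_ X).hom, hc]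
    simp [Linear.smul_comp]
  calc w = E.symm (E w) := (E.symm_apply_apply w).symm
    _ = E.symm (c • (ρ_ X).inv) := by rw [hsym]
    _ = c • E.symm ((ρ_ X).inv) := by simp [hE, tensorLeftHomEquiv, Linear.smul_comp]
    _ = c • Pivotal.ev X := by rw [← hco, E.symm_apply_apply]


theorem statement16 (hC : PreFusion k C) (X : C) (hX : SimpleObj k X) :
    (∃ c : k, IsUnit c ∧ diml X = c • 𝟙 (𝟙_ C)) ∧
    (∃ c : k, IsUnit c ∧ dimr X = c • 𝟙 (𝟙_ C)) := by
  constructor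
  · -- left dimension
    have h3 : Pivotal.coev' X = 0 → (1 : k) = 0 := by
      intro hcv
      have hz := Pivotal.zig₃ X
      rw [hcv] at hz
      simp only [MonoidalPreadditive.whiskerLeft_zero, comp_zero, zero_comp] at hz
      exact one_eq_zero_of_id_zero X hX hz.symm
    obtain ⟨c, hu, hc⟩ := key_unit hC (Pivotal.dual X ⊗ X) (Pivotal.coev' X)
      (Pivotal.ev X) (h1L X hX) (h2L X hX) h3
    refine ⟨c, hu, ?_⟩
    rw [Pivotal.diml, Pivotal.trl]
    simpa using hc
  · -- right dimension
    have h3 : Pivotal.coev X = 0 → (1 : k) = 0 := by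
      intro hcv
      have hz := Pivotal.zig₁ X
      rw [hcv] at hz
      simp only [MonoidalPreadditive.zero_whiskerRight, comp_zero, zero_comp] at hz
      exact one_eq_zero_of_id_zero X hX hz.symm
    obtain ⟨c, hu, hc⟩ := key_unit hC (X ⊗ Pivotal.dual X) (Pivotal.coev X)
      (Pivotal.ev' X) (h1R X hX) (h2R X hX) h3
    refine ⟨c, hu, ?_⟩
    rw [Pivotal.dimr, Pivotal.trr]
    simpa using hc


end Statement

end SurgeryHQFT
end
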